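/- Let p ∈ [0,1] and let n, ñ, N, Ñ, E₁, E₂, C, L′ be real numbers with n ≥ 0, N ≥ 0, Ñ ≥ 0, E₁ ≥ 0, E₂ ≥ 0, C ≥ 0, L′ ≥ 0. Assume N ≤ Ñ + E₁, Ñ ≤ N + E₁, |ñ − n| ≤ E₂, and |n/(N ∨ 1) − p| ≤ C·√(L′·p/(N ∨ 1)) + C·L′/(N ∨ 1). Then |ñ/((Ñ + E₁) ∨ 1) − p| ≤ C·√(L′·p/((Ñ + E₁) ∨ 1)) + (C·L′ + 2E₁ + E₂)/((Ñ + E₁) ∨ 1). -/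

import Mathlib

/-- Bernstein-type concentration of a single private transition probability
estimate (third part of Lemma `lem:conc_vi`): if the private counts `Ñ, ñ` are
within `E₁, E₂` of the true counts `N, n`, and the non-private empirical
probability `n/(N ∨ 1)` satisfies a variance-aware bound
`|n/(N ∨ 1) − p| ≤ C√(L′ p/(N ∨ 1)) + C L′/(N ∨ 1)`, then
`|ñ/((Ñ + E₁) ∨ 1) − p| ≤ C√(L′ p/((Ñ + E₁) ∨ 1))
   + (C L′ + 2E₁ + E₂)/((Ñ + E₁) ∨ 1)`. -/
theorem private_single_transition_bernstein
    (p n ntil N Ntil E1 E2 C L' : ℝ)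
    (hp : p ∈ Set.Icc (0 : ℝ) 1)
    (hn : 0 ≤ n) (hN : 0 ≤ N) (hNtil : 0 ≤ Ntil)
    (hE1 : 0 ≤ E1) (hE2 : 0 ≤ E2) (hC : 0 ≤ C) (hL' : 0 ≤ L')
    (h1 : N ≤ Ntil + E1) (h2 : Ntil ≤ N + E1)
    (h3 : |ntil - n| ≤ E2)
    (h4 : |n / max N 1 - p| ≤
      C * Real.sqrt (L' * p / max N 1) + C * L' / max N 1) :
    |ntil / max (Ntil + E1) 1 - p| ≤
      C * Real.sqrt (L' * p / max (Ntil + E1) 1)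
        + (C * L' + 2 * E1 + E2) / max (Ntil + E1) 1 := by
  obtain ⟨hp0, hp1⟩ := hp
  set a := max N 1 with ha_def
  set b := max (Ntil + E1) 1 with hb_def
  have ha1 : (1:ℝ) ≤ a := le_max_right _ _
  have hb1 : (1:ℝ) ≤ b := le_max_right _ _
  have ha0 : (0:ℝ) < a := lt_of_lt_of_le one_pos ha1
  have hb0 : (0:ℝ) < b := lt_of_lt_of_le one_pos hb1
  have hab : a ≤ b := max_le_max h1 le_rfl
  have hba : b ≤ a + 2 * E1 := by
    have hNa : N ≤ a := le_max_left _ _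
    exact max_le (by linarith) (by linarith)
  have key : n / b - p = (n / a - p) * (a / b) - p * (b - a) / b := by
    field_simp
    ring
  have hstep1 : |ntil / b - p| ≤ E2 / b + |n / b - p| := by
    have hsplit : ntil / b - p = (ntil - n) / b + (n / b - p) := by ring
    rw [hsplit]
    refine (abs_add_le _ _).trans ?_
    gcongr
    rw [abs_div, abs_of_pos hb0]
    gcongr
  have hstep2 : |n / b - p| ≤ |n / a - p| * (a / b) + 2 * E1 / b := by
    rw [key]
    refine (abs_sub _ _).trans ?_
    have e1 : |(n / a - p) * (a / b)| = |n / a - p| * (a / b) := by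
      rw [abs_mul, abs_of_pos (div_pos ha0 hb0)]
    have e2 : |p * (b - a) / b| = p * (b - a) / b :=
      abs_of_nonneg (div_nonneg (mul_nonneg hp0 (sub_nonneg.2 hab)) hb0.le)
    rw [e1, e2]
    have h9 : p * (b - a) / b ≤ 2 * E1 / b := by
      apply div_le_div_of_nonneg_right ?_ hb0.le
      nlinarith
    linarith
  have hsqa : Real.sqrt (L' * p / a) * a = Real.sqrt (L' * p * a) := by
    rw [show L' * p * a = L' * p / a * a ^ 2 by field_simp,
      Real.sqrt_mul (by positivity), Real.sqrt_sq ha0.le]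
  have hsqb : Real.sqrt (L' * p * b) / b = Real.sqrt (L' * p / b) := by
    rw [show L' * p * b = L' * p / b * b ^ 2 by field_simp,
      Real.sqrt_mul (by positivity), Real.sqrt_sq hb0.le]
    field_simp
  have hstep3 : |n / a - p| * (a / b) ≤ C * Real.sqrt (L' * p / b) + C * L' / b := by
    have h5 : |n / a - p| * (a / b) ≤
        (C * Real.sqrt (L' * p / a) + C * L' / a) * (a / b) := by
      gcongr
    refine h5.trans ?_
    have h6 : (C * Real.sqrt (L' * p / a) + C * L' / a) * (a / b)
        = C * (Real.sqrt (L' * p / a) * a) / b + C * L' / b := by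
      field_simp
    rw [h6, hsqa]
    have h7 : Real.sqrt (L' * p * a) ≤ Real.sqrt (L' * p * b) := by
      apply Real.sqrt_le_sqrt
      have := mul_le_mul_of_nonneg_left hab (mul_nonneg hL' hp0)
      linarith
    have h8 : C * Real.sqrt (L' * p * a) / b ≤ C * Real.sqrt (L' * p / b) := by
      rw [← hsqb]
      rw [mul_div_assoc]
      gcongr
    linarith
  calc |ntil / b - p| ≤ E2 / b + (|n / a - p| * (a / b) + 2 * E1 / b) :=
        hstep1.trans (by linarith)
    _ ≤ E2 / b + (C * Real.sqrt (L' * p / b) + C * L' / b + 2 * E1 / b) := by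
        linarith
    _ = C * Real.sqrt (L' * p / b) + (C * L' + 2 * E1 + E2) / b := by ring
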